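/- Suppose the graph has dimension at most D with constant c_D, let η > D and c_0 > 0 be real, and suppose |X_{i,j}| ≤ c_0·(1 + dist(i,j))^{−η} and |P_{i,j}| ≤ c_0·(1 + dist(i,j))^{−η} for all i, j. Then for all i, j ∈ L and all t ∈ ℝ, both |C^{xx}_{i,j}(t)| and |C^{pp}_{i,j}(t)| are bounded above by sinh(τ) / (a_0 · (1 + dist(i,j))^{η}), where a_0 = c_D·2^{η+1}·ζ(η + 1 − D) and τ = a_0·c_0·|t|. -/

import Mathlib

/-- The Riemann zeta function at a real argument, `ζ(s) = ∑_{n≥1} n^{−s}`. -/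
noncomputable def zetaReal (s : ℝ) : ℝ := ∑' n : ℕ, ((n : ℝ) + 1) ^ (-s)

lemma zeta_summable {s : ℝ} (hs : 1 < s) : Summable (fun n : ℕ => ((n : ℝ) + 1) ^ (-s)) := by
  have h : Summable (fun n : ℕ => (n : ℝ) ^ (-s)) := Real.summable_nat_rpow.2 (by linarith)
  have h2 := h.comp_injective (add_left_injective 1)
  refine h2.congr fun n => ?_
  simp [Function.comp]

lemma one_le_zeta {s : ℝ} (hs : 1 < s) : 1 ≤ zetaReal s := by
  have h := Summable.le_tsum (zeta_summable hs) 0 (fun n _ => by positivity)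
  simpa [zetaReal] using h

lemma rpow_half_bound {x y η : ℝ} (hx : 0 < x) (hy : 0 < y) (hη : 0 ≤ η) (h : x ≤ 2 * y) :
    y ^ (-η) ≤ 2 ^ η * x ^ (-η) := by
  have h1 : y⁻¹ ≤ 2 / x := by rw [inv_eq_one_div, div_le_div_iff₀ hy hx]; linarith
  have h2 := Real.rpow_le_rpow (by positivity) h1 hη
  rwa [Real.inv_rpow hy.le, Real.div_rpow (by norm_num) hx.le, ← Real.rpow_neg hy.le,
    div_eq_mul_inv, ← Real.rpow_neg hx.le] at h2

lemma sphere_sum {V : Type*} [Fintype V] [DecidableEq V]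
    (G : SimpleGraph V) (hconn : G.Connected) (D : ℕ) (hD : 1 ≤ D)
    (cD : ℝ) (hcD : 1 ≤ cD)
    (hdim : ∀ i : V, ∀ r : ℕ, 1 ≤ r →
      ((Finset.univ.filter (fun k : V => G.dist i k = r)).card : ℝ) ≤ cD * (r : ℝ) ^ (D - 1))
    (η : ℝ) (hη : (D : ℝ) < η) (a : V) :
    ∑ k : V, (1 + (G.dist a k : ℝ)) ^ (-η) ≤ cD * zetaReal (η + 1 - D) := by
  have hD1 : (1:ℝ) ≤ (D:ℝ) := by exact_mod_cast hD
  have hs : 1 < η + 1 - D := by linarith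
  have hη0 : 0 < η := by linarith
  set s : ℝ := η + 1 - D with hsdef
  have key : ∀ r : ℕ,
      ((Finset.univ.filter (fun k : V => G.dist a k = r)).card : ℝ) * (1 + (r:ℝ)) ^ (-η)
        ≤ cD * ((r:ℝ) + 1) ^ (-s) := by
    intro r
    rcases Nat.eq_zero_or_pos r with hr | hr
    · subst hr
      have hcard : (Finset.univ.filter (fun k : V => G.dist a k = 0)) = {a} := by
        ext k
        simp [hconn.dist_eq_zero_iff, eq_comm]
      rw [hcard]
      simp
      exact hcD
    · have h1 : ((Finset.univ.filter (fun k : V => G.dist a k = r)).card : ℝ)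
          ≤ cD * (r : ℝ) ^ (D - 1) := hdim a r hr
      have hrpos : (0:ℝ) < r := by exact_mod_cast hr
      have h2 : (r : ℝ) ^ (D - 1) ≤ ((r:ℝ) + 1) ^ ((D:ℝ) - 1) := by
        have : (r : ℝ) ^ (D - 1) ≤ ((r:ℝ) + 1) ^ (D - 1) :=
          pow_le_pow_left₀ (by positivity) (by linarith) _
        refine this.trans ?_
        rw [← Real.rpow_natCast ((r:ℝ)+1) (D-1)]
        gcongr
        · linarith
        · push_cast [Nat.cast_sub hD]; linarith
      have h3 : ((r:ℝ)+1) ^ ((D:ℝ) - 1) * ((r:ℝ) + 1) ^ (-η) = ((r:ℝ)+1) ^ (-s) := by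
        rw [← Real.rpow_add (by positivity), hsdef]
        ring_nf
      have hbpos : (0:ℝ) < (1 + (r:ℝ)) ^ (-η) := Real.rpow_pos_of_pos (by positivity) _
      calc ((Finset.univ.filter (fun k : V => G.dist a k = r)).card : ℝ) * (1 + (r:ℝ)) ^ (-η)
          ≤ (cD * (r : ℝ) ^ (D - 1)) * (1 + (r:ℝ)) ^ (-η) := by gcongr
        _ ≤ (cD * ((r:ℝ)+1) ^ ((D:ℝ) - 1)) * (1 + (r:ℝ)) ^ (-η) := by gcongr
        _ = cD * ((r:ℝ)+1) ^ (-s) := by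
            rw [show (1 + (r:ℝ)) = ((r:ℝ) + 1) by ring, mul_assoc, h3]
  calc ∑ k : V, (1 + (G.dist a k : ℝ)) ^ (-η)
      = ∑ r ∈ Finset.univ.image (fun k => G.dist a k),
          ((Finset.univ.filter (fun k : V => G.dist a k = r)).card : ℝ) * (1 + (r:ℝ)) ^ (-η) := by
        rw [Finset.sum_comp (fun r : ℕ => (1 + (r:ℝ)) ^ (-η)) (fun k => G.dist a k)]
        simp [nsmul_eq_mul]
    _ ≤ ∑ r ∈ Finset.univ.image (fun k => G.dist a k), cD * ((r:ℝ) + 1) ^ (-s) :=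
        Finset.sum_le_sum fun r _ => key r
    _ ≤ ∑' r : ℕ, cD * ((r:ℝ) + 1) ^ (-s) := by
        refine Summable.sum_le_tsum _ (fun r _ => by positivity) ?_
        exact (zeta_summable hs).mul_left cD
    _ = cD * zetaReal s := by rw [zetaReal, tsum_mul_left]

lemma conv_sum {V : Type*} [Fintype V] [DecidableEq V]
    (G : SimpleGraph V) (hconn : G.Connected) (D : ℕ) (hD : 1 ≤ D)
    (cD : ℝ) (hcD : 1 ≤ cD)
    (hdim : ∀ i : V, ∀ r : ℕ, 1 ≤ r →
      ((Finset.univ.filter (fun k : V => G.dist i k = r)).card : ℝ) ≤ cD * (r : ℝ) ^ (D - 1))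
    (η : ℝ) (hη : (D : ℝ) < η) (a b : V) :
    ∑ k : V, (1 + (G.dist a k : ℝ)) ^ (-η) * (1 + (G.dist k b : ℝ)) ^ (-η)
      ≤ cD * (2:ℝ) ^ (η + 1) * zetaReal (η + 1 - D) * (1 + (G.dist a b : ℝ)) ^ (-η) := by
  have hD1 : (1:ℝ) ≤ (D:ℝ) := by exact_mod_cast hD
  have hη0 : 0 < η := by linarith
  have hd : ∀ u v : V, (0:ℝ) < 1 + (G.dist u v : ℝ) := fun u v => by positivity
  have hKpos : ∀ u v : V, (0:ℝ) < (1 + (G.dist u v : ℝ)) ^ (-η) :=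
    fun u v => Real.rpow_pos_of_pos (hd u v) _
  have hpt : ∀ k : V, (1 + (G.dist a k : ℝ)) ^ (-η) * (1 + (G.dist k b : ℝ)) ^ (-η)
      ≤ 2 ^ η * (1 + (G.dist a b : ℝ)) ^ (-η) *
        ((1 + (G.dist a k : ℝ)) ^ (-η) + (1 + (G.dist k b : ℝ)) ^ (-η)) := by
    intro k
    have htri : G.dist a b ≤ G.dist a k + G.dist k b := hconn.dist_triangle
    rcases le_total (G.dist a k) (G.dist k b) with hle | hle
    · have h2 : (1 + (G.dist a b : ℝ)) ≤ 2 * (1 + (G.dist k b : ℝ)) := by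
        have : (G.dist a b : ℝ) ≤ (G.dist a k : ℝ) + (G.dist k b : ℝ) := by exact_mod_cast htri
        have : (G.dist a k : ℝ) ≤ (G.dist k b : ℝ) := by exact_mod_cast hle
        push_cast at *
        linarith
      have hb := rpow_half_bound (hd a b) (hd k b) hη0.le h2
      calc (1 + (G.dist a k : ℝ)) ^ (-η) * (1 + (G.dist k b : ℝ)) ^ (-η)
          ≤ (1 + (G.dist a k : ℝ)) ^ (-η) * (2 ^ η * (1 + (G.dist a b : ℝ)) ^ (-η)) := by
            gcongr
        _ = 2 ^ η * (1 + (G.dist a b : ℝ)) ^ (-η) * (1 + (G.dist a k : ℝ)) ^ (-η) := by ring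
        _ ≤ _ := by
            have := (hKpos k b).le
            have h2η : (0:ℝ) ≤ 2 ^ η * (1 + (G.dist a b : ℝ)) ^ (-η) := by positivity
            nlinarith [hKpos a k]
    · have h2 : (1 + (G.dist a b : ℝ)) ≤ 2 * (1 + (G.dist a k : ℝ)) := by
        have h3 : (G.dist a b : ℝ) ≤ (G.dist a k : ℝ) + (G.dist k b : ℝ) := by exact_mod_cast htri
        have h4 : (G.dist k b : ℝ) ≤ (G.dist a k : ℝ) := by exact_mod_cast hle
        linarith
      have hb := rpow_half_bound (hd a b) (hd a k) hη0.le h2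
      calc (1 + (G.dist a k : ℝ)) ^ (-η) * (1 + (G.dist k b : ℝ)) ^ (-η)
          ≤ (2 ^ η * (1 + (G.dist a b : ℝ)) ^ (-η)) * (1 + (G.dist k b : ℝ)) ^ (-η) := by
            gcongr
        _ ≤ _ := by
            have h2η : (0:ℝ) ≤ 2 ^ η * (1 + (G.dist a b : ℝ)) ^ (-η) := by positivity
            nlinarith [hKpos a k, hKpos k b]
  calc ∑ k : V, (1 + (G.dist a k : ℝ)) ^ (-η) * (1 + (G.dist k b : ℝ)) ^ (-η)
      ≤ ∑ k : V, 2 ^ η * (1 + (G.dist a b : ℝ)) ^ (-η) *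
          ((1 + (G.dist a k : ℝ)) ^ (-η) + (1 + (G.dist k b : ℝ)) ^ (-η)) :=
        Finset.sum_le_sum fun k _ => hpt k
    _ = 2 ^ η * (1 + (G.dist a b : ℝ)) ^ (-η) *
          ((∑ k : V, (1 + (G.dist a k : ℝ)) ^ (-η)) + ∑ k : V, (1 + (G.dist k b : ℝ)) ^ (-η)) := by
        rw [← Finset.mul_sum, Finset.sum_add_distrib]
    _ ≤ 2 ^ η * (1 + (G.dist a b : ℝ)) ^ (-η) *
          (cD * zetaReal (η + 1 - D) + cD * zetaReal (η + 1 - D)) := by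
        have hs1 := sphere_sum G hconn D hD cD hcD hdim η hη a
        have hs2 : ∑ k : V, (1 + (G.dist k b : ℝ)) ^ (-η) ≤ cD * zetaReal (η + 1 - D) := by
          have hc : ∀ k : V, (1 + (G.dist k b : ℝ)) ^ (-η) = (1 + (G.dist b k : ℝ)) ^ (-η) := by
            intro k; rw [SimpleGraph.dist_comm]
          rw [Finset.sum_congr rfl fun k _ => hc k]
          exact sphere_sum G hconn D hD cD hcD hdim η hη b
        have hnn : (0:ℝ) ≤ 2 ^ η * (1 + (G.dist a b : ℝ)) ^ (-η) := by positivity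
        exact mul_le_mul_of_nonneg_left (add_le_add hs1 hs2) hnn
    _ = cD * (2:ℝ) ^ (η + 1) * zetaReal (η + 1 - D) * (1 + (G.dist a b : ℝ)) ^ (-η) := by
        rw [Real.rpow_add (by norm_num : (0:ℝ) < 2), Real.rpow_one]
        ring

lemma series_bound {V : Type*} [Fintype V] [DecidableEq V]
    (G : SimpleGraph V) (hconn : G.Connected) (D : ℕ) (hD : 1 ≤ D)
    (cD : ℝ) (hcD : 1 ≤ cD)
    (hdim : ∀ i : V, ∀ r : ℕ, 1 ≤ r →
      ((Finset.univ.filter (fun k : V => G.dist i k = r)).card : ℝ) ≤ cD * (r : ℝ) ^ (D - 1))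
    (η : ℝ) (hη : (D : ℝ) < η) (c₀ : ℝ) (hc₀ : 0 < c₀)
    (A B : Matrix V V ℝ)
    (hA : ∀ u v : V, |A u v| ≤ c₀ * (1 + (G.dist u v : ℝ)) ^ (-η))
    (hB : ∀ u v : V, |B u v| ≤ c₀ * (1 + (G.dist u v : ℝ)) ^ (-η))
    (i j : V) (t : ℝ) :
    |∑' n : ℕ, (-1 : ℝ) ^ n * t ^ (2 * n + 1) * (((A * B) ^ n * A) i j) /
      (Nat.factorial (2 * n + 1))| ≤
      Real.sinh (cD * (2:ℝ) ^ (η + 1) * zetaReal (η + 1 - D) * c₀ * |t|) /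
        (cD * (2:ℝ) ^ (η + 1) * zetaReal (η + 1 - D) * (1 + (G.dist i j : ℝ)) ^ η) := by
  have hD1 : (1:ℝ) ≤ (D:ℝ) := by exact_mod_cast hD
  have hs : 1 < η + 1 - D := by linarith
  set a₀ : ℝ := cD * (2:ℝ) ^ (η + 1) * zetaReal (η + 1 - D) with ha₀def
  have hζ : 1 ≤ zetaReal (η + 1 - D) := one_le_zeta hs
  have h2η : (0:ℝ) < (2:ℝ) ^ (η + 1) := Real.rpow_pos_of_pos (by norm_num) _
  have ha₀ : 0 < a₀ := by
    apply mul_pos (mul_pos (by linarith) h2η); linarith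
  have hKpos : ∀ u v : V, (0:ℝ) < (1 + (G.dist u v : ℝ)) ^ (-η) :=
    fun u v => Real.rpow_pos_of_pos (by positivity) _
  -- multiplication step
  have hmul : ∀ (M : ℝ), 0 ≤ M → ∀ (C W : Matrix V V ℝ),
      (∀ u v, |C u v| ≤ c₀ * (1 + (G.dist u v : ℝ)) ^ (-η)) →
      (∀ u v, |W u v| ≤ M * (1 + (G.dist u v : ℝ)) ^ (-η)) →
      ∀ u v, |(C * W) u v| ≤ c₀ * M * a₀ * (1 + (G.dist u v : ℝ)) ^ (-η) := by
    intro M hM C W hC hW u v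
    rw [Matrix.mul_apply]
    calc |∑ k : V, C u k * W k v| ≤ ∑ k : V, |C u k * W k v| :=
          Finset.abs_sum_le_sum_abs _ _
      _ ≤ ∑ k : V, (c₀ * (1 + (G.dist u k : ℝ)) ^ (-η)) * (M * (1 + (G.dist k v : ℝ)) ^ (-η)) :=
          Finset.sum_le_sum fun k _ => by
            rw [abs_mul]
            exact mul_le_mul (hC u k) (hW k v) (abs_nonneg _) (by positivity)
      _ = (c₀ * M) * ∑ k : V, (1 + (G.dist u k : ℝ)) ^ (-η) * (1 + (G.dist k v : ℝ)) ^ (-η) := by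
          rw [Finset.mul_sum]
          exact Finset.sum_congr rfl fun k _ => by ring
      _ ≤ (c₀ * M) * (a₀ * (1 + (G.dist u v : ℝ)) ^ (-η)) := by
          have := conv_sum G hconn D hD cD hcD hdim η hη u v
          have hcM : 0 ≤ c₀ * M := by positivity
          exact mul_le_mul_of_nonneg_left (by rw [ha₀def]; linarith [this]) hcM
      _ = c₀ * M * a₀ * (1 + (G.dist u v : ℝ)) ^ (-η) := by ring
  -- inductive bound on matrix powers
  have hind : ∀ n : ℕ, ∀ u v : V,
      |(((A * B) ^ n * A)) u v| ≤ (a₀ * c₀) ^ (2 * n) * c₀ * (1 + (G.dist u v : ℝ)) ^ (-η) := by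
    intro n
    induction n with
    | zero => intro u v; simpa using hA u v
    | succ n ih =>
      have h1 := hmul ((a₀ * c₀) ^ (2 * n) * c₀) (by positivity) B _ hB ih
      have h2 := hmul (c₀ * ((a₀ * c₀) ^ (2 * n) * c₀) * a₀) (by positivity) A _ hA h1
      intro u v
      have heq : (A * B) ^ (n + 1) * A = A * (B * ((A * B) ^ n * A)) := by
        rw [pow_succ', mul_assoc, mul_assoc]
      rw [heq]
      refine (h2 u v).trans (le_of_eq ?_)
      have : c₀ * (c₀ * ((a₀ * c₀) ^ (2 * n) * c₀) * a₀) * a₀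
          = (a₀ * c₀) ^ (2 * (n + 1)) * c₀ := by
        rw [show 2 * (n + 1) = 2 * n + 2 from by ring, pow_add]
        ring
      rw [this]
  -- the series
  set τ : ℝ := a₀ * c₀ * |t| with hτdef
  set K : ℝ := (1 + (G.dist i j : ℝ)) ^ (-η) with hKdef
  set f : ℕ → ℝ := fun n => (-1 : ℝ) ^ n * t ^ (2 * n + 1) * (((A * B) ^ n * A) i j) /
      (Nat.factorial (2 * n + 1)) with hfdef
  set g : ℕ → ℝ := fun n => τ ^ (2 * n + 1) / (Nat.factorial (2 * n + 1)) * (K / a₀) with hgdef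
  have hfg : ∀ n, |f n| ≤ g n := by
    intro n
    have hfac : (0:ℝ) < (Nat.factorial (2 * n + 1) : ℝ) := by positivity
    have habs : |f n| = |t| ^ (2 * n + 1) * |(((A * B) ^ n * A)) i j| /
        (Nat.factorial (2 * n + 1)) := by
      rw [hfdef]
      simp [abs_div, abs_mul, abs_pow, abs_abs, abs_of_pos hfac]
    rw [habs]
    have hstep : |t| ^ (2 * n + 1) * |(((A * B) ^ n * A)) i j| / (Nat.factorial (2 * n + 1))
        ≤ |t| ^ (2 * n + 1) * ((a₀ * c₀) ^ (2 * n) * c₀ * K) / (Nat.factorial (2 * n + 1)) := by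
      gcongr
      exact hind n i j
    refine hstep.trans (le_of_eq ?_)
    have hgn : g n = τ ^ (2 * n + 1) / (Nat.factorial (2 * n + 1)) * (K / a₀) := rfl
    have hτpow : τ ^ (2 * n + 1) = (a₀ * c₀) ^ (2 * n) * (a₀ * c₀) * |t| ^ (2 * n + 1) := by
      rw [hτdef, mul_pow, pow_succ]
    rw [hgn, hτpow]
    field_simp
  have hgsum : Summable g := ((Real.hasSum_sinh τ).summable).mul_right _
  have habssum : Summable fun n => |f n| :=
    Summable.of_nonneg_of_le (fun n => abs_nonneg _) hfg hgsum
  have hfsum : Summable f := habssum.of_abs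
  have h1 : |∑' n, f n| ≤ ∑' n, |f n| := by
    have := norm_tsum_le_tsum_norm (f := f) (by simpa using habssum)
    simpa using this
  have h2 : ∑' n, |f n| ≤ ∑' n, g n := Summable.tsum_le_tsum hfg habssum hgsum
  have h3 : ∑' n, g n = Real.sinh τ * (K / a₀) := by
    rw [hgdef, tsum_mul_right, (Real.hasSum_sinh τ).tsum_eq]
  have h4 : Real.sinh τ * (K / a₀) = Real.sinh τ / (a₀ * (1 + (G.dist i j : ℝ)) ^ η) := by
    rw [hKdef, Real.rpow_neg (by positivity)]
    have hp : (0:ℝ) < (1 + (G.dist i j : ℝ)) ^ η := Real.rpow_pos_of_pos (by positivity) _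
    rw [div_eq_mul_inv, ← mul_inv_rev, ← div_eq_mul_inv]
  calc |∑' n, f n| ≤ ∑' n, |f n| := h1
    _ ≤ ∑' n, g n := h2
    _ = Real.sinh τ / (a₀ * (1 + (G.dist i j : ℝ)) ^ η) := by rw [h3, h4]

/-- `C^{xx}_{i,j}(t) = ∑_{n≥0} (−1)^n t^{2n+1} ((PX)^n P)_{i,j}/(2n+1)!`,
which equals `i[x̂_i(t), x̂_j]` for the harmonic Hamiltonian. -/
noncomputable def Cxx {V : Type*} [Fintype V] [DecidableEq V]
    (X P : Matrix V V ℝ) (i j : V) (t : ℝ) : ℝ :=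
  ∑' n : ℕ, (-1 : ℝ) ^ n * t ^ (2 * n + 1) * (((P * X) ^ n * P) i j) /
    (Nat.factorial (2 * n + 1))

/-- `C^{pp}_{i,j}(t) = ∑_{n≥0} (−1)^n t^{2n+1} ((XP)^n X)_{i,j}/(2n+1)!`,
which equals `i[p̂_i(t), p̂_j]` for the harmonic Hamiltonian. -/
noncomputable def Cpp {V : Type*} [Fintype V] [DecidableEq V]
    (X P : Matrix V V ℝ) (i j : V) (t : ℝ) : ℝ :=
  ∑' n : ℕ, (-1 : ℝ) ^ n * t ^ (2 * n + 1) * (((X * P) ^ n * X) i j) /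
    (Nat.factorial (2 * n + 1))

/-- **Lieb-Robinson bounds for non-local (algebraically decaying) couplings**,
`xx` and `pp` commutators: both are bounded by `sinh(τ)/(a₀·(1 + dist(i,j))^η)` with
`a₀ = c_D·2^{η+1}·ζ(η + 1 − D)` and `τ = a₀·c₀·|t|`. -/
theorem lieb_robinson_nonlocal_xx_pp {V : Type*} [Fintype V] [DecidableEq V]
    (G : SimpleGraph V) (hconn : G.Connected) (D : ℕ) (hD : 1 ≤ D)
    (cD : ℝ) (hcD : 1 ≤ cD)
    (hdim : ∀ i : V, ∀ r : ℕ, 1 ≤ r →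
      ((Finset.univ.filter (fun k : V => G.dist i k = r)).card : ℝ) ≤ cD * (r : ℝ) ^ (D - 1))
    (η : ℝ) (hη : (D : ℝ) < η) (c₀ : ℝ) (hc₀ : 0 < c₀)
    (X P : Matrix V V ℝ) (hX : X.IsSymm) (hP : P.IsSymm)
    (hXdec : ∀ i j : V, |X i j| ≤ c₀ * (1 + (G.dist i j : ℝ)) ^ (-η))
    (hPdec : ∀ i j : V, |P i j| ≤ c₀ * (1 + (G.dist i j : ℝ)) ^ (-η))
    (i j : V) (t : ℝ) :
    let a₀ : ℝ := cD * (2 : ℝ) ^ (η + 1) * zetaReal (η + 1 - D)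
    let τ : ℝ := a₀ * c₀ * |t|
    |Cxx X P i j t| ≤ Real.sinh τ / (a₀ * (1 + (G.dist i j : ℝ)) ^ η) ∧
    |Cpp X P i j t| ≤ Real.sinh τ / (a₀ * (1 + (G.dist i j : ℝ)) ^ η) := by
  intro a₀ τ
  constructor
  · exact series_bound G hconn D hD cD hcD hdim η hη c₀ hc₀ P X hPdec hXdec i j t
  · exact series_bound G hconn D hD cD hcD hdim η hη c₀ hc₀ X P hXdec hPdec i j t
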